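/- Projected gradient descent with fixed step size η on a convex compact set X ⊆ ℝⁿ of diameter at most R, with updates x_{t+1} = P_X(x_t - η g_t) where ‖g_t‖₂ ≤ G for all t, satisfies the weighted regret bound: for any z ∈ X and any probability weights w ∈ Δ_T with w_{t+1} ≥ w_t for all t, ∑_{t=1}^T w_t ⟨x_t - z, g_t⟩ ≤ w_T R²/(2η) + η G²/2. -/

import Mathlib

open Finset

lemma proj_nonexp_aux {n : ℕ} {X : Set (EuclideanSpace ℝ (Fin n))}
    (hX : Convex ℝ X) {p u z : EuclideanSpace ℝ (Fin n)}
    (hp : p ∈ X) (hz : z ∈ X)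
    (hmin : ∀ y ∈ X, ‖p - u‖ ≤ ‖y - u‖) : ‖p - z‖ ≤ ‖u - z‖ := by
  haveI : Nonempty X := ⟨⟨p, hp⟩⟩
  have hbdd : BddBelow (Set.range fun y : X => ‖u - (y : EuclideanSpace ℝ (Fin n))‖) := by
    refine ⟨0, ?_⟩
    rintro b ⟨y, rfl⟩
    exact norm_nonneg _
  have h1 : ‖u - p‖ = ⨅ w : X, ‖u - w‖ := by
    apply le_antisymm
    · exact le_ciInf fun y => by
        rw [norm_sub_rev, norm_sub_rev u]; exact hmin y y.2
    · exact ciInf_le hbdd ⟨p, hp⟩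
  have h2 := (norm_eq_iInf_iff_real_inner_le_zero hX hp).mp h1 z hz
  have expand : ‖u - z‖ ^ 2 =
      ‖u - p‖ ^ 2 - 2 * inner ℝ (u - p) (z - p) + ‖p - z‖ ^ 2 := by
    have h3 : u - z = (u - p) - (z - p) := by abel
    rw [h3, norm_sub_sq_real, norm_sub_rev z p]
  nlinarith [norm_nonneg (u - z), norm_nonneg (p - z), norm_nonneg (u - p),
    sq_nonneg (‖u - z‖ + ‖p - z‖)]

theorem projected_gd_weighted_regret
    (n : ℕ) (X : Set (EuclideanSpace ℝ (Fin n)))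
    (hXconv : Convex ℝ X) (hXcomp : IsCompact X) (hXne : X.Nonempty)
    (R G η : ℝ) (hη : 0 < η)
    (hR : ∀ x ∈ X, ∀ y ∈ X, ‖x - y‖ ≤ R)
    (T : ℕ) (hT : 1 ≤ T)
    (x g : ℕ → EuclideanSpace ℝ (Fin n))
    (hG : ∀ t ∈ Finset.Icc 1 T, ‖g t‖ ≤ G)
    (hxX : ∀ t, x t ∈ X)
    (hproj : ∀ t, ∀ y ∈ X, ‖x (t + 1) - (x t - η • g t)‖ ≤ ‖y - (x t - η • g t)‖)
    (w : ℕ → ℝ) (hw0 : ∀ t ∈ Finset.Icc 1 T, 0 ≤ w t)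
    (hwsum : ∑ t ∈ Finset.Icc 1 T, w t = 1)
    (hwmono : ∀ t ∈ Finset.Icc 1 (T - 1), w t ≤ w (t + 1)) :
    ∀ z ∈ X,
      ∑ t ∈ Finset.Icc 1 T, w t * inner ℝ (x t - z) (g t) ≤
        w T * R ^ 2 / (2 * η) + η * G ^ 2 / 2 := by
  intro z hz
  set a : ℕ → ℝ := fun t => ‖x t - z‖ ^ 2 with ha
  have haR : ∀ t, a t ≤ R ^ 2 := fun t => by
    have h := hR (x t) (hxX t) z hz
    have := norm_nonneg (x t - z)
    simp only [ha]; nlinarith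
  have ha0 : ∀ t, 0 ≤ a t := fun t => sq_nonneg _
  have hG0 : 0 ≤ G := le_trans (norm_nonneg _) (hG 1 (by simp [hT]))
  -- per-step inequality
  have step : ∀ t ∈ Finset.Icc 1 T, w t * inner ℝ (x t - z) (g t) ≤
      w t * ((a t - a (t + 1)) / (2 * η)) + w t * (η / 2 * ‖g t‖ ^ 2) := by
    intro t ht
    have hwt : 0 ≤ w t := hw0 t ht
    have hcontr : ‖x (t + 1) - z‖ ≤ ‖(x t - η • g t) - z‖ :=
      proj_nonexp_aux hXconv (hxX (t + 1)) hz (hproj t)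
    have hsq : a (t + 1) ≤ ‖(x t - z) - η • g t‖ ^ 2 := by
      have h4 : (x t - η • g t) - z = (x t - z) - η • g t := by abel
      rw [← h4]
      exact pow_le_pow_left₀ (norm_nonneg _) hcontr 2
    have hexp : ‖(x t - z) - η • g t‖ ^ 2 =
        a t - 2 * η * inner ℝ (x t - z) (g t) + η ^ 2 * ‖g t‖ ^ 2 := by
      rw [norm_sub_sq_real, real_inner_smul_right, norm_smul, Real.norm_eq_abs,
        abs_of_pos hη]
      simp only [ha]; ring
    have h2η : (0:ℝ) < 2 * η := by linarith
    have hineq : inner ℝ (x t - z) (g t) ≤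
        (a t - a (t + 1)) / (2 * η) + η / 2 * ‖g t‖ ^ 2 := by
      rw [div_add' _ _ _ (ne_of_gt h2η), le_div_iff₀ h2η]
      nlinarith [hsq, hexp]
    calc w t * inner ℝ (x t - z) (g t)
        ≤ w t * ((a t - a (t + 1)) / (2 * η) + η / 2 * ‖g t‖ ^ 2) :=
          mul_le_mul_of_nonneg_left hineq hwt
      _ = w t * ((a t - a (t + 1)) / (2 * η)) + w t * (η / 2 * ‖g t‖ ^ 2) := by ring
  -- Abel-type bound
  have abel : ∀ S, 1 ≤ S → S ≤ T →
      ∑ t ∈ Finset.Icc 1 S, w t * (a t - a (t + 1)) ≤ w S * (R ^ 2 - a (S + 1)) := by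
    intro S hS1 hST
    induction S with
    | zero => omega
    | succ S ih =>
      rcases Nat.eq_or_lt_of_le hS1 with h1 | h1
      · simp only [← h1]
        simp only [Finset.Icc_self, Finset.sum_singleton]
        have hw1 : 0 ≤ w 1 := hw0 1 (by simp [hT])
        nlinarith [haR 1, ha0 2, haR 2]
      · have hS1' : 1 ≤ S := by omega
        have hST' : S ≤ T := by omega
        have hmonoS : w S ≤ w (S + 1) := hwmono S (by simp; omega)
        have hwS : 0 ≤ w S := hw0 S (by simp; omega)
        have hwS1 : 0 ≤ w (S + 1) := hw0 (S + 1) (by simp; omega)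
        rw [Finset.sum_Icc_succ_top (by omega)]
        have hih := ih hS1' hST'
        nlinarith [haR (S + 1), ha0 (S + 1), ha0 (S + 2), haR (S + 2)]
  have habel := abel T hT le_rfl
  have hgsum : ∑ t ∈ Finset.Icc 1 T, w t * (η / 2 * ‖g t‖ ^ 2) ≤ η / 2 * G ^ 2 := by
    have : ∑ t ∈ Finset.Icc 1 T, w t * (η / 2 * ‖g t‖ ^ 2) ≤
        ∑ t ∈ Finset.Icc 1 T, w t * (η / 2 * G ^ 2) := by
      apply Finset.sum_le_sum
      intro t ht
      have hwt := hw0 t ht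
      have hgt := hG t ht
      have hgn := norm_nonneg (g t)
      have h5 : ‖g t‖ ^ 2 ≤ G ^ 2 := by nlinarith
      have h6 : η / 2 * ‖g t‖ ^ 2 ≤ η / 2 * G ^ 2 :=
        mul_le_mul_of_nonneg_left h5 (by positivity)
      exact mul_le_mul_of_nonneg_left h6 hwt
    rw [← Finset.sum_mul] at this
    rw [hwsum] at this
    linarith
  have hsum1 : ∑ t ∈ Finset.Icc 1 T, w t * ((a t - a (t + 1)) / (2 * η)) ≤
      w T * R ^ 2 / (2 * η) := by
    have heq : ∑ t ∈ Finset.Icc 1 T, w t * ((a t - a (t + 1)) / (2 * η)) =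
        (∑ t ∈ Finset.Icc 1 T, w t * (a t - a (t + 1))) / (2 * η) := by
      rw [Finset.sum_div]
      exact Finset.sum_congr rfl fun t _ => by ring
    rw [heq]
    have hwT : 0 ≤ w T := hw0 T (by simp [hT])
    have hA : ∑ t ∈ Finset.Icc 1 T, w t * (a t - a (t + 1)) ≤ w T * R ^ 2 := by
      nlinarith [habel, ha0 (T + 1)]
    gcongr
  calc ∑ t ∈ Finset.Icc 1 T, w t * inner ℝ (x t - z) (g t)
      ≤ ∑ t ∈ Finset.Icc 1 T,
          (w t * ((a t - a (t + 1)) / (2 * η)) + w t * (η / 2 * ‖g t‖ ^ 2)) :=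
        Finset.sum_le_sum step
    _ = (∑ t ∈ Finset.Icc 1 T, w t * ((a t - a (t + 1)) / (2 * η))) +
          ∑ t ∈ Finset.Icc 1 T, w t * (η / 2 * ‖g t‖ ^ 2) := Finset.sum_add_distrib
    _ ≤ w T * R ^ 2 / (2 * η) + η / 2 * G ^ 2 := add_le_add hsum1 hgsum
    _ = w T * R ^ 2 / (2 * η) + η * G ^ 2 / 2 := by ring
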